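/- If the restricted root system Σ is of type BC_n or C_n (n ≥ 2) with multiplicity m(2e_i) = 1, and α is a longest root of Σ̃ with restriction e_1 + e_k (2 ≤ k ≤ n), then for any root β with restriction e_1 − e_k, one has (α,β) = 0 unless β = α_1 − α or β = α − α_k, where α_i denotes the unique root with restriction 2e_i. -/
import Mathlib


open scoped RealInnerProductSpace

/-- In the restricted root setting of type BC_n/C_n (n ≥ 2) with
multiplicity m(2e_i) = 1 (so that α_i is the unique root of Σ̃ restricting to 2e_i),
if α is a longest root of Σ̃ with restriction e_1 + e_k (2 ≤ k ≤ n), then for any root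
β with restriction e_1 − e_k one has (α,β) = 0 unless β = α_1 − α or β = α − α_k. -/
theorem stmt_10 {V : Type*} [NormedAddCommGroup V] [InnerProductSpace ℝ V]
    (Sg : Set V)
    (hrs_pos : ∀ γ ∈ Sg, ∀ δ ∈ Sg, 0 < ⟪γ, δ⟫ → γ ≠ δ → γ - δ ∈ Sg)
    (hrs_neg : ∀ γ ∈ Sg, ∀ δ ∈ Sg, ⟪γ, δ⟫ < 0 → γ ≠ -δ → γ + δ ∈ Sg)
    (hint : ∀ γ ∈ Sg, ∀ δ ∈ Sg, ∃ z : ℤ, 2 * ⟪γ, δ⟫ = z * ⟪γ, γ⟫)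
    (σ : V →ₗ[ℝ] V) (res : V → V)
    (hres : ∀ v, res v = (1 / 2 : ℝ) • (v + σ v))
    (E1 Ek : V) (hindep : LinearIndependent ℝ ![E1, Ek])
    (α β α1 αk : V) (hα : α ∈ Sg) (hβ : β ∈ Sg) (hα1 : α1 ∈ Sg) (hαk : αk ∈ Sg)
    (hlongest : ∀ γ ∈ Sg, ‖γ‖ ≤ ‖α‖)
    (hresα : res α = E1 + Ek) (hresβ : res β = E1 - Ek)
    (hresα1 : res α1 = (2 : ℝ) • E1) (hresαk : res αk = (2 : ℝ) • Ek)
    (huniq1 : ∀ γ ∈ Sg, res γ = (2 : ℝ) • E1 → γ = α1)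
    (huniqk : ∀ γ ∈ Sg, res γ = (2 : ℝ) • Ek → γ = αk) :
    β = α1 - α ∨ β = α - αk ∨ ⟪α, β⟫ = 0 := by
  have hpair := LinearIndependent.pair_iff.mp hindep
  have hE1 : E1 ≠ 0 := by
    intro h
    have := (hpair 1 0 (by simp [h])).1
    norm_num at this
  have hEk : Ek ≠ 0 := by
    intro h
    have := (hpair 0 1 (by simp [h])).2
    norm_num at this
  have hsum0 : E1 + Ek ≠ 0 := by
    intro h
    have := (hpair 1 1 (by simpa using h)).1
    norm_num at this
  -- res is additive / negation-compatible
  have hadd : ∀ u v : V, res (u + v) = res u + res v := by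
    intro u v
    simp only [hres, map_add, smul_add]
    module
  have hsub : ∀ u v : V, res (u - v) = res u - res v := by
    intro u v
    simp only [hres, map_sub, smul_sub]
    module
  have hneg : ∀ u : V, res (-u) = -res u := by
    intro u
    simp only [hres, map_neg]
    module
  -- α ≠ β, α ≠ -β, α ≠ 0
  have hαβ : α ≠ β := by
    intro h
    apply hEk
    have : E1 + Ek = E1 - Ek := by rw [← hresα, ← hresβ, h]
    have h2 : (2 : ℝ) • Ek = 0 := by
      have := sub_eq_zero.mpr this
      rw [show E1 + Ek - (E1 - Ek) = (2:ℝ) • Ek by module] at this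
      exact this
    have := smul_eq_zero.mp h2
    rcases this with h' | h'
    · norm_num at h'
    · exact h'
  have hαnβ : α ≠ -β := by
    intro h
    apply hE1
    have : E1 + Ek = -(E1 - Ek) := by rw [← hresα, ← hresβ, ← hneg, h]
    have h2 : (2 : ℝ) • E1 = 0 := by
      rw [show (2:ℝ) • E1 = (E1 + Ek) + (E1 - Ek) by module, this]; module
    rcases smul_eq_zero.mp h2 with h' | h'
    · norm_num at h'
    · exact h'
  have hα0 : α ≠ 0 := by
    intro h
    apply hsum0
    rw [← hresα, h, hres]
    simp
  have hαα : (0 : ℝ) < ⟪α, α⟫ := by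
    have h0 : 0 < ‖α‖ := norm_pos_iff.mpr hα0
    rw [real_inner_self_eq_norm_mul_norm]
    positivity
  obtain ⟨z, hz⟩ := hint α hα β hβ
  have hnormβ : ‖β‖ ≤ ‖α‖ := hlongest β hβ
  have hcs : |⟪α, β⟫| ≤ ⟪α, α⟫ := by
    calc |⟪α, β⟫| ≤ ‖α‖ * ‖β‖ := abs_real_inner_le_norm α β
    _ ≤ ‖α‖ * ‖α‖ := by
        apply mul_le_mul_of_nonneg_left hnormβ (norm_nonneg α)
    _ = ⟪α, α⟫ := (real_inner_self_eq_norm_mul_norm α).symm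
  have hzbd : -2 ≤ z ∧ z ≤ 2 := by
    constructor
    · by_contra h
      push_neg at h
      have h3 : z ≤ -3 := by omega
      have hz3 : (z : ℝ) ≤ -3 := by exact_mod_cast h3
      have : 2 * ⟪α, β⟫ ≤ -3 * ⟪α, α⟫ := by
        rw [hz]
        exact mul_le_mul_of_nonneg_right hz3 (le_of_lt hαα)
      have h' : -⟪α, α⟫ ≤ ⟪α, β⟫ := neg_le_of_abs_le hcs
      nlinarith
    · by_contra h
      push_neg at h
      have h3 : 3 ≤ z := by omega
      have hz3 : (3 : ℝ) ≤ (z : ℝ) := by exact_mod_cast h3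
      have : 3 * ⟪α, α⟫ ≤ 2 * ⟪α, β⟫ := by
        rw [hz]
        exact mul_le_mul_of_nonneg_right hz3 (le_of_lt hαα)
      have h' : ⟪α, β⟫ ≤ ⟪α, α⟫ := le_of_abs_le hcs
      nlinarith
  obtain ⟨hzl, hzr⟩ := hzbd
  have hββ : ⟪β, β⟫ ≤ ⟪α, α⟫ := by
    rw [real_inner_self_eq_norm_mul_norm, real_inner_self_eq_norm_mul_norm]
    exact mul_le_mul hnormβ hnormβ (norm_nonneg β) (norm_nonneg α)
  interval_cases z
  · -- z = -2 : β = -α, contradiction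
    exfalso
    have ht : ⟪α, β⟫ = -⟪α, α⟫ := by push_cast at hz; linarith
    have : ‖α + β‖ ^ 2 ≤ 0 := by
      rw [norm_add_pow_two_real]
      rw [ht, real_inner_self_eq_norm_mul_norm α, real_inner_self_eq_norm_mul_norm β] at *
      nlinarith [norm_nonneg α, norm_nonneg β]
    have h0 : α + β = 0 := by
      have := norm_eq_zero.mp (le_antisymm (by nlinarith [norm_nonneg (α + β)]) (norm_nonneg (α + β)))
      exact this
    exact hαnβ (by linear_combination (norm := module) h0)
  · -- z = -1 : β = α1 - α
    left
    have ht : ⟪α, β⟫ < 0 := by push_cast at hz; linarith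
    have hmem : α + β ∈ Sg := hrs_neg α hα β hβ ht hαnβ
    have hr : res (α + β) = (2 : ℝ) • E1 := by
      rw [hadd, hresα, hresβ]; module
    have h' := huniq1 _ hmem hr
    rw [← h']; abel
  · -- z = 0
    right; right
    push_cast at hz; linarith
  · -- z = 1 : β = α - αk
    right; left
    have ht : 0 < ⟪α, β⟫ := by push_cast at hz; linarith
    have hmem : α - β ∈ Sg := hrs_pos α hα β hβ ht hαβ
    have hr : res (α - β) = (2 : ℝ) • Ek := by
      rw [hsub, hresα, hresβ]; module
    have h' := huniqk _ hmem hr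
    rw [← h']; abel
  · -- z = 2 : β = α, contradiction
    exfalso
    have ht : ⟪α, β⟫ = ⟪α, α⟫ := by push_cast at hz; linarith
    have : ‖α - β‖ ^ 2 ≤ 0 := by
      rw [norm_sub_pow_two_real]
      rw [ht, real_inner_self_eq_norm_mul_norm α, real_inner_self_eq_norm_mul_norm β] at *
      nlinarith [norm_nonneg α, norm_nonneg β]
    have h0 : α - β = 0 := by
      have := norm_eq_zero.mp (le_antisymm (by nlinarith [norm_nonneg (α - β)]) (norm_nonneg (α - β)))
      exact this
    exact hαβ (by linear_combination (norm := module) h0)
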